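/- Let a, b, c ∈ ℝ^T, τ ∈ (0, 1), and δ ∈ ℝ^T with δ ≠ 0. Then equality ‖δ + b − a‖₂ + (1/(1−τ))·‖δ‖₂ + ‖c − b + (τ/(1−τ))·δ‖₂ = ‖b − a‖₂ + ‖c − b‖₂ holds if and only if δ is aligned with a − b, δ is aligned with b − c, and ‖δ‖₂ ≤ min{‖a − b‖₂, ((1−τ)/τ)·‖b − c‖₂}. -/

import Mathlib

/-- Two vectors `u₁, u₂ ∈ ℝ^T` are aligned if `⟪u₁, u₂⟫ = ‖u₁‖₂ ‖u₂‖₂`. -/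
def Aligned {T : ℕ} (u₁ u₂ : EuclideanSpace ℝ (Fin T)) : Prop :=
  (inner ℝ u₁ u₂ : ℝ) = ‖u₁‖ * ‖u₂‖

lemma aligned_iff_sameRay {T : ℕ} (x y : EuclideanSpace ℝ (Fin T)) :
    Aligned x y ↔ SameRay ℝ x y := by
  rw [Aligned, inner_eq_norm_mul_iff_real, sameRay_iff_norm_smul_eq, eq_comm]

lemma sameRay_sub_iff {T : ℕ} {δ u : EuclideanSpace ℝ (Fin T)} (hδ : δ ≠ 0) :
    SameRay ℝ (u - δ) δ ↔ SameRay ℝ δ u ∧ ‖δ‖ ≤ ‖u‖ := by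
  constructor
  · intro h
    obtain ⟨r, hr, hrδ⟩ := h.symm.exists_nonneg_left hδ
    have hu : u = (1 + r) • δ := by
      rw [add_smul, one_smul, hrδ]; abel
    refine ⟨by rw [hu]; exact SameRay.sameRay_nonneg_smul_right δ (by linarith), ?_⟩
    rw [hu, norm_smul, Real.norm_eq_abs, abs_of_nonneg (by linarith : (0:ℝ) ≤ 1 + r)]
    nlinarith [norm_nonneg δ]
  · rintro ⟨h, hle⟩
    obtain ⟨r, hr, hrδ⟩ := h.exists_nonneg_left hδ
    have hδn : 0 < ‖δ‖ := norm_pos_iff.mpr hδ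
    have hun : ‖u‖ = r * ‖δ‖ := by
      rw [← hrδ, norm_smul, Real.norm_eq_abs, abs_of_nonneg hr]
    have hr1 : 1 ≤ r := by nlinarith
    have hsub : u - δ = (r - 1) • δ := by rw [← hrδ, sub_smul, one_smul]
    rw [hsub]
    exact SameRay.sameRay_nonneg_smul_left δ (by linarith)

lemma sameRay_smul_left_iff_pos {T : ℕ} {δ w : EuclideanSpace ℝ (Fin T)} {s : ℝ}
    (hs : 0 < s) : SameRay ℝ (s • δ) w ↔ SameRay ℝ δ w := by
  constructor
  · intro h
    refine (SameRay.sameRay_pos_smul_right δ hs).trans h fun h0 => Or.inl ?_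
    rcases smul_eq_zero.mp h0 with h' | h'
    · exact absurd h' hs.ne'
    · exact h'
  · intro h
    refine (SameRay.sameRay_pos_smul_left δ hs).trans h fun h0 => Or.inl (by rw [h0, smul_zero])

set_option maxHeartbeats 1000000 in
/-- For `δ ≠ 0` and `τ ∈ (0,1)`, equality
`‖δ + b − a‖ + (1/(1−τ))‖δ‖ + ‖c − b + (τ/(1−τ))δ‖ = ‖b − a‖ + ‖c − b‖`
holds iff `δ` is aligned with `a − b`, `δ` is aligned with `b − c`, and
`‖δ‖ ≤ min{‖a − b‖, ((1−τ)/τ)‖b − c‖}`. -/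
theorem knot_removal_equality_iff {T : ℕ} (a b c δ : EuclideanSpace ℝ (Fin T))
    (τ : ℝ) (hτ : τ ∈ Set.Ioo (0 : ℝ) 1) (hδ : δ ≠ 0) :
    ‖δ + b - a‖ + (1 / (1 - τ)) * ‖δ‖ + ‖c - b + (τ / (1 - τ)) • δ‖ =
        ‖b - a‖ + ‖c - b‖ ↔
      Aligned δ (a - b) ∧ Aligned δ (b - c) ∧
        ‖δ‖ ≤ min ‖a - b‖ (((1 - τ) / τ) * ‖b - c‖) := by
  obtain ⟨hτ0, hτ1⟩ := hτ
  have h1τ : 0 < 1 - τ := by linarith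
  set s : ℝ := τ / (1 - τ) with hs_def
  have hs : 0 < s := div_pos hτ0 h1τ
  have hsδ : s • δ ≠ 0 := smul_ne_zero hs.ne' hδ
  have hδn : 0 < ‖δ‖ := norm_pos_iff.mpr hδ
  -- rewrite the norms
  have n1 : ‖δ + b - a‖ = ‖(a - b) - δ‖ := by
    rw [show δ + b - a = -((a - b) - δ) from by abel, norm_neg]
  have n2 : ‖c - b + s • δ‖ = ‖(b - c) - s • δ‖ := by
    rw [show c - b + s • δ = -((b - c) - s • δ) from by abel, norm_neg]
  have n3 : ‖b - a‖ = ‖a - b‖ := norm_sub_rev _ _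
  have n4 : ‖c - b‖ = ‖b - c‖ := norm_sub_rev _ _
  have nsδ : ‖s • δ‖ = s * ‖δ‖ := by
    rw [norm_smul, Real.norm_eq_abs, abs_of_pos hs]
  have n5 : (1 / (1 - τ)) * ‖δ‖ = ‖δ‖ + ‖s • δ‖ := by
    rw [nsδ, hs_def]; field_simp; ring
  -- triangle inequalities
  have i1 : ‖a - b‖ ≤ ‖(a - b) - δ‖ + ‖δ‖ := by
    have := norm_add_le ((a - b) - δ) δ
    simpa using this
  have i2 : ‖b - c‖ ≤ ‖(b - c) - s • δ‖ + ‖s • δ‖ := by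
    have := norm_add_le ((b - c) - s • δ) (s • δ)
    simpa using this
  have key : ‖δ + b - a‖ + (1 / (1 - τ)) * ‖δ‖ + ‖c - b + s • δ‖ =
      ‖b - a‖ + ‖c - b‖ ↔
      (‖a - b‖ = ‖(a - b) - δ‖ + ‖δ‖ ∧ ‖b - c‖ = ‖(b - c) - s • δ‖ + ‖s • δ‖) := by
    rw [n1, n2, n3, n4, n5]
    constructor
    · intro h
      constructor <;> linarith
    · rintro ⟨h1, h2⟩; linarith
  rw [key]
  -- characterize each equality
  have e1 : ‖a - b‖ = ‖(a - b) - δ‖ + ‖δ‖ ↔ SameRay ℝ δ (a - b) ∧ ‖δ‖ ≤ ‖a - b‖ := by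
    rw [← sameRay_sub_iff hδ, sameRay_iff_norm_add]
    simp
  have escalar : s * ‖δ‖ ≤ ‖b - c‖ ↔ ‖δ‖ ≤ ((1 - τ) / τ) * ‖b - c‖ := by
    rw [hs_def, div_mul_eq_mul_div, div_le_iff₀ h1τ, div_mul_eq_mul_div, le_div_iff₀ hτ0]
    constructor <;> intro h <;> nlinarith
  have e2 : ‖b - c‖ = ‖(b - c) - s • δ‖ + ‖s • δ‖ ↔
      SameRay ℝ δ (b - c) ∧ ‖δ‖ ≤ ((1 - τ) / τ) * ‖b - c‖ := by
    have h' : ‖b - c‖ = ‖(b - c) - s • δ‖ + ‖s • δ‖ ↔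
        SameRay ℝ ((b - c) - s • δ) (s • δ) := by
      rw [sameRay_iff_norm_add]; simp
    rw [h', sameRay_sub_iff hsδ, sameRay_smul_left_iff_pos hs, nsδ, escalar]
  rw [e1, e2, le_min_iff]
  simp only [aligned_iff_sameRay]
  tauto
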